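/- Let n ≥ 1, let L₁,…,Lₙ > 0, S > 0, t > 0, and let μ be the product on ℝⁿ of n copies of the exponential distribution with rate 1. Then, as P → ∞, Pⁿ · μ{λ ∈ ℝⁿ : ∑_{i=1}^n Lᵢ·log₂(1 + S·λᵢ·P) < t} converges to the Lebesgue measure of the set {u ∈ ℝⁿ : uᵢ ≥ 0 for all i, and ∑_{i=1}^n Lᵢ·log₂(1 + S·uᵢ) < t}. -/

import Mathlib

open MeasureTheory ProbabilityTheory Real Filter

lemma lintegral_pi_prod : ∀ (n : ℕ) (g : Fin n → ℝ → ENNReal), (∀ i, Measurable (g i)) →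
    ∫⁻ x : Fin n → ℝ, ∏ i, g i (x i) ∂(Measure.pi fun _ => (volume : Measure ℝ))
      = ∏ i, ∫⁻ y, g i y := by
  intro n
  induction n with
  | zero =>
    intro g hg
    rw [Measure.pi_of_empty]
    simp
  | succ m ih =>
    intro g hg
    have hT := (measurePreserving_piFinSuccAbove
      (fun _ : Fin (m + 1) => (volume : Measure ℝ)) 0).symm
    have hF : Measurable fun x : Fin (m + 1) → ℝ => ∏ i, g i (x i) :=
      Finset.measurable_prod _ fun i _ => (hg i).comp (measurable_pi_apply i)
    rw [← hT.lintegral_comp hF]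
    have key : ∀ z : ℝ × (Fin m → ℝ),
        (∏ i, g i (((MeasurableEquiv.piFinSuccAbove (fun _ => ℝ) 0).symm z) i))
          = g 0 z.1 * ∏ j, g j.succ (z.2 j) := by
      intro z
      have : ((MeasurableEquiv.piFinSuccAbove (fun _ : Fin (m+1) => ℝ) 0).symm z)
          = Fin.cons z.1 z.2 := by
        simp [MeasurableEquiv.piFinSuccAbove, Fin.insertNthEquiv, Fin.insertNth_zero]
      rw [this, Fin.prod_univ_succ]
      simp
    simp_rw [key]
    have h2 : Measurable fun b : Fin m → ℝ => ∏ j, g j.succ (b j) :=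
      Finset.measurable_prod _ fun j _ => (hg j.succ).comp (measurable_pi_apply j)
    calc ∫⁻ z : ℝ × (Fin m → ℝ), g 0 z.1 * ∏ j, g j.succ (z.2 j)
          ∂((volume : Measure ℝ).prod (Measure.pi fun _ => (volume : Measure ℝ)))
        = (∫⁻ y, g 0 y) * ∫⁻ x : Fin m → ℝ, ∏ j, g j.succ (x j)
            ∂(Measure.pi fun _ => (volume : Measure ℝ)) :=
          lintegral_prod_mul (hg 0).aemeasurable h2.aemeasurable
      _ = ∏ i, ∫⁻ y, g i y := by
          rw [ih (fun j => g j.succ) (fun j => hg j.succ), Fin.prod_univ_succ]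

lemma measurable_expPDF : Measurable (exponentialPDF 1) :=
  (measurable_exponentialPDFReal 1).ennreal_ofReal

lemma pi_exp_eq_withDensity (n : ℕ) :
    (Measure.pi fun _ : Fin n => expMeasure 1)
      = volume.withDensity fun x : Fin n → ℝ => ∏ i, exponentialPDF 1 (x i) := by
  haveI : IsProbabilityMeasure (expMeasure 1) := isProbabilityMeasure_expMeasure one_pos
  refine Measure.pi_eq fun s hs => ?_
  rw [withDensity_apply _ (MeasurableSet.univ_pi hs)]
  rw [← lintegral_indicator (MeasurableSet.univ_pi hs) _]
  have : ∀ x : Fin n → ℝ,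
      (Set.pi Set.univ s).indicator (fun x => ∏ i, exponentialPDF 1 (x i)) x
        = ∏ i, (s i).indicator (exponentialPDF 1) (x i) := by
    intro x
    by_cases hx : x ∈ Set.pi Set.univ s
    · rw [Set.indicator_of_mem hx]
      exact Finset.prod_congr rfl fun i _ =>
        (Set.indicator_of_mem (hx i (Set.mem_univ i)) _).symm
    · rw [Set.indicator_of_notMem hx]
      obtain ⟨j, hj⟩ : ∃ j, x j ∉ s j := by
        by_contra h
        push_neg at h
        exact hx fun i _ => h i
      exact (Finset.prod_eq_zero (Finset.mem_univ j)
        (Set.indicator_of_notMem hj _)).symm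
  simp_rw [this]
  rw [volume_pi, lintegral_pi_prod n _ (fun i => measurable_expPDF.indicator (hs i))]
  refine Finset.prod_congr rfl fun i _ => ?_
  rw [lintegral_indicator (hs i) _]
  rw [expMeasure, gammaMeasure, withDensity_apply _ (hs i)]
  rfl

theorem bound_tendsto_classic
    (n : ℕ) (hn : 1 ≤ n) (L : Fin n → ℝ) (hL : ∀ i, 0 < L i)
    (S t : ℝ) (hS : 0 < S) (ht : 0 < t)
    (μ : Measure (Fin n → ℝ))
    (hμ : μ = Measure.pi fun _ : Fin n => expMeasure 1) :
    Tendsto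
      (fun P : ℝ => ENNReal.ofReal (P ^ n) *
        μ {lam : Fin n → ℝ | ∑ i, L i * Real.logb 2 (1 + S * lam i * P) < t})
      atTop
      (nhds (volume {u : Fin n → ℝ |
        (∀ i, 0 ≤ u i) ∧ ∑ i, L i * Real.logb 2 (1 + S * u i) < t})) := by
  classical
  set B : Set (Fin n → ℝ) :=
    {u : Fin n → ℝ | (∀ i, 0 ≤ u i) ∧ ∑ i, L i * Real.logb 2 (1 + S * u i) < t} with hBdef
  -- measurability of the sums
  have hsummeas : ∀ c : ℝ,
      Measurable fun u : Fin n → ℝ => ∑ i, L i * Real.logb 2 (1 + S * u i * c) := by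
    intro c
    apply Finset.measurable_sum
    intro i _
    apply Measurable.const_mul
    simp only [Real.logb]
    exact (Real.measurable_log.comp
      (by fun_prop : Measurable fun x : Fin n → ℝ => 1 + S * x i * c)).div_const _
  have hApmeas : ∀ P : ℝ,
      MeasurableSet {lam : Fin n → ℝ | ∑ i, L i * Real.logb 2 (1 + S * lam i * P) < t} :=
    fun P => measurableSet_lt (hsummeas P) measurable_const
  have hsummeas1 : Measurable fun u : Fin n → ℝ => ∑ i, L i * Real.logb 2 (1 + S * u i) := by
    have := hsummeas 1
    simpa using this
  have hBmeas : MeasurableSet B := by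
    have h1 : MeasurableSet {u : Fin n → ℝ | ∀ i, 0 ≤ u i} := by
      have : {u : Fin n → ℝ | ∀ i, 0 ≤ u i} = ⋂ i, {u : Fin n → ℝ | 0 ≤ u i} := by
        ext u; simp
      rw [this]
      exact MeasurableSet.iInter fun i =>
        measurableSet_le measurable_const (measurable_pi_apply i)
    have h2 : MeasurableSet {u : Fin n → ℝ | ∑ i, L i * Real.logb 2 (1 + S * u i) < t} :=
      measurableSet_lt hsummeas1 measurable_const
    exact h1.inter h2
  -- the family of integrands and integrals
  set F : ℝ → (Fin n → ℝ) → ENNReal := fun P u =>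
    B.indicator (fun u => ENNReal.ofReal (Real.exp (-(∑ i, u i) / P))) u with hFdef
  set G : ℝ → ENNReal := fun P => ∫⁻ u, F P u with hGdef
  have hsum0 : Measurable fun u : Fin n → ℝ => ∑ i, u i :=
    Finset.measurable_sum _ fun i _ => measurable_pi_apply i
  have hFmeas : ∀ P : ℝ, Measurable (F P) := fun P =>
    (((hsum0.neg.div_const P).exp).ennreal_ofReal).indicator hBmeas
  -- Claim 1 : rescaling identity
  have key : ∀ P : ℝ, 1 ≤ P →
      ENNReal.ofReal (P ^ n) *
        μ {lam : Fin n → ℝ | ∑ i, L i * Real.logb 2 (1 + S * lam i * P) < t} = G P := by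
    intro P hP
    have hP0 : (0:ℝ) < P := lt_of_lt_of_le one_pos hP
    have hPne : P ≠ 0 := hP0.ne'
    set A := {lam : Fin n → ℝ | ∑ i, L i * Real.logb 2 (1 + S * lam i * P) < t} with hAdef
    have hA : MeasurableSet A := hApmeas P
    have hprodmeas : Measurable fun x : Fin n → ℝ => ∏ i, exponentialPDF 1 (x i) :=
      Finset.measurable_prod _ fun i _ => measurable_expPDF.comp (measurable_pi_apply i)
    have hhmeas : Measurable (A.indicator fun x : Fin n → ℝ => ∏ i, exponentialPDF 1 (x i)) :=
      hprodmeas.indicator hA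
    rw [hμ, pi_exp_eq_withDensity, withDensity_apply _ hA, ← lintegral_indicator hA _]
    have hmap : (volume : Measure (Fin n → ℝ)).map (P⁻¹ • ·)
        = ENNReal.ofReal (P ^ n) • volume := by
      rw [Measure.map_addHaar_smul volume (inv_ne_zero hPne)]
      congr 1
      rw [Module.finrank_fin_fun, inv_pow, inv_inv, abs_of_nonneg (pow_nonneg hP0.le n)]
    calc ENNReal.ofReal (P ^ n)
          * ∫⁻ x, (A.indicator fun x : Fin n → ℝ => ∏ i, exponentialPDF 1 (x i)) x
        = ∫⁻ x, (A.indicator fun x : Fin n → ℝ => ∏ i, exponentialPDF 1 (x i)) x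
            ∂(ENNReal.ofReal (P ^ n) • volume) := by rw [lintegral_smul_measure, smul_eq_mul]
      _ = ∫⁻ x, (A.indicator fun x : Fin n → ℝ => ∏ i, exponentialPDF 1 (x i)) x
            ∂((volume : Measure (Fin n → ℝ)).map (P⁻¹ • ·)) := by rw [hmap]
      _ = ∫⁻ u, (A.indicator fun x : Fin n → ℝ => ∏ i, exponentialPDF 1 (x i)) (P⁻¹ • u) :=
          lintegral_map hhmeas (measurable_const_smul _)
      _ = G P := by
          apply lintegral_congr
          intro u
          have hsum_eq : ∑ i, L i * Real.logb 2 (1 + S * ((P⁻¹ • u) i) * P)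
              = ∑ i, L i * Real.logb 2 (1 + S * u i) := by
            refine Finset.sum_congr rfl fun i _ => ?_
            have : S * ((P⁻¹ • u) i) * P = S * u i := by
              simp only [Pi.smul_apply, smul_eq_mul]
              field_simp
            rw [this]
          by_cases hc : ∑ i, L i * Real.logb 2 (1 + S * u i) < t
          · by_cases hpos : ∀ i, 0 ≤ u i
            · have huB : u ∈ B := ⟨hpos, hc⟩
              have huA : P⁻¹ • u ∈ A := by
                simp only [hAdef, Set.mem_setOf_eq, hsum_eq]
                exact hc
              rw [Set.indicator_of_mem huA, hFdef]
              simp only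
              rw [Set.indicator_of_mem huB]
              have hfac : ∀ i : Fin n, exponentialPDF 1 ((P⁻¹ • u) i)
                  = ENNReal.ofReal (Real.exp (-(P⁻¹ * u i))) := by
                intro i
                have h0 : (0:ℝ) ≤ P⁻¹ * u i :=
                  mul_nonneg (inv_nonneg.mpr hP0.le) (hpos i)
                rw [Pi.smul_apply, smul_eq_mul, exponentialPDF_of_nonneg h0]
                simp
              simp_rw [hfac]
              rw [← ENNReal.ofReal_prod_of_nonneg (fun i _ => (Real.exp_nonneg _)),
                ← Real.exp_sum]
              congr 2
              simp only [neg_div, div_eq_inv_mul, Finset.sum_neg_distrib]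
              rw [mul_neg, Finset.mul_sum]
            · push_neg at hpos
              obtain ⟨j, hj⟩ := hpos
              have huB : u ∉ B := fun h => absurd (h.1 j) (not_le.mpr hj)
              rw [hFdef]
              simp only
              rw [Set.indicator_of_notMem huB]
              rw [Set.indicator_apply]
              split_ifs with h
              · refine Finset.prod_eq_zero (Finset.mem_univ j) ?_
                apply exponentialPDF_of_neg
                rw [Pi.smul_apply, smul_eq_mul]
                exact mul_neg_of_pos_of_neg (inv_pos.mpr hP0) hj
              · rfl
          · have huA : P⁻¹ • u ∉ A := by
              simp only [hAdef, Set.mem_setOf_eq, hsum_eq]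
              exact hc
            have huB : u ∉ B := fun h => hc h.2
            rw [Set.indicator_of_notMem huA, hFdef]
            simp only
            rw [Set.indicator_of_notMem huB]
  -- Claim 2 : monotonicity
  have hGmono : ∀ P Q : ℝ, 1 ≤ P → P ≤ Q → G P ≤ G Q := by
    intro P Q hP hPQ
    have hP0 : (0:ℝ) < P := lt_of_lt_of_le one_pos hP
    have hQ0 : (0:ℝ) < Q := lt_of_lt_of_le hP0 hPQ
    apply lintegral_mono
    intro u
    by_cases hu : u ∈ B
    · rw [hFdef]
      simp only
      rw [Set.indicator_of_mem hu, Set.indicator_of_mem hu]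
      apply ENNReal.ofReal_le_ofReal
      apply Real.exp_le_exp.mpr
      have hc : (0:ℝ) ≤ ∑ i, u i := Finset.sum_nonneg fun i _ => hu.1 i
      rw [neg_div, neg_div, neg_le_neg_iff]
      exact div_le_div_of_nonneg_left hc hP0 hPQ
    · rw [hFdef]
      simp only
      rw [Set.indicator_of_notMem hu, Set.indicator_of_notMem hu]
  -- the shifted monotone function
  set g' : ℝ → ENNReal := fun P => G (max P 1) with hg'def
  have hg'mono : Monotone g' := fun P Q h =>
    hGmono _ _ (le_max_right _ _) (max_le_max h le_rfl)
  -- Claim 3 : the supremum is the volume of B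
  have hsup : ⨆ P : ℝ, g' P = volume B := by
    apply le_antisymm
    · apply iSup_le
      intro P
      rw [hg'def]
      simp only
      rw [← lintegral_indicator_one hBmeas]
      apply lintegral_mono
      intro u
      by_cases hu : u ∈ B
      · rw [hFdef]
        simp only
        rw [Set.indicator_of_mem hu, Set.indicator_of_mem hu]
        apply ENNReal.ofReal_le_one.mpr
        apply Real.exp_le_one_iff.mpr
        have hc : (0:ℝ) ≤ ∑ i, u i := Finset.sum_nonneg fun i _ => hu.1 i
        rw [neg_div]
        simp only [Left.neg_nonpos_iff]
        positivity
      · rw [hFdef]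
        simp only
        rw [Set.indicator_of_notMem hu, Set.indicator_of_notMem hu]
    · have hseq : ⨆ k : ℕ, G ((k:ℝ) + 1) = volume B := by
        rw [← lintegral_indicator_one hBmeas]
        have hmonoseq : Monotone fun k : ℕ => F ((k:ℝ) + 1) := by
          intro k l hkl u
          by_cases hu : u ∈ B
          · rw [hFdef]
            simp only
            rw [Set.indicator_of_mem hu, Set.indicator_of_mem hu]
            apply ENNReal.ofReal_le_ofReal
            apply Real.exp_le_exp.mpr
            have hc : (0:ℝ) ≤ ∑ i, u i := Finset.sum_nonneg fun i _ => hu.1 i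
            rw [neg_div, neg_div, neg_le_neg_iff]
            apply div_le_div_of_nonneg_left hc (by positivity)
            exact_mod_cast Nat.add_le_add_right hkl 1
          · rw [hFdef]
            simp only
            rw [Set.indicator_of_notMem hu, Set.indicator_of_notMem hu]
        rw [← lintegral_iSup (fun k => hFmeas _) hmonoseq]
        apply lintegral_congr
        intro u
        by_cases hu : u ∈ B
        · have : ∀ k : ℕ, F ((k:ℝ) + 1) u
              = ENNReal.ofReal (Real.exp (-(∑ i, u i) / ((k:ℝ) + 1))) := by
            intro k
            rw [hFdef]
            simp only
            rw [Set.indicator_of_mem hu]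
          simp_rw [this]
          rw [Set.indicator_of_mem hu]
          have hmono2 : Monotone fun k : ℕ =>
              ENNReal.ofReal (Real.exp (-(∑ i, u i) / ((k:ℝ) + 1))) := by
            intro k l hkl
            apply ENNReal.ofReal_le_ofReal
            apply Real.exp_le_exp.mpr
            have hc : (0:ℝ) ≤ ∑ i, u i := Finset.sum_nonneg fun i _ => hu.1 i
            rw [neg_div, neg_div, neg_le_neg_iff]
            apply div_le_div_of_nonneg_left hc (by positivity)
            exact_mod_cast Nat.add_le_add_right hkl 1
          refine iSup_eq_of_tendsto hmono2 ?_
          have h1 : Tendsto (fun k : ℕ => -(∑ i, u i) / ((k:ℝ) + 1)) atTop (nhds 0) := by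
            have := tendsto_one_div_add_atTop_nhds_zero_nat.const_mul (-(∑ i, u i))
            rw [mul_zero] at this
            refine this.congr fun k => ?_
            rw [mul_one_div]
          have h2 : Tendsto (fun k : ℕ => Real.exp (-(∑ i, u i) / ((k:ℝ) + 1)))
              atTop (nhds 1) := by
            have := (Real.continuous_exp.tendsto 0).comp h1
            simpa [Function.comp_def] using this
          have h3 := (ENNReal.continuous_ofReal.tendsto 1).comp h2
          simpa [Function.comp_def] using h3
        · have : ∀ k : ℕ, F ((k:ℝ) + 1) u = 0 := by
            intro k
            rw [hFdef]
            simp only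
            rw [Set.indicator_of_notMem hu]
          simp_rw [this]
          rw [Set.indicator_of_notMem hu]
          simp
      calc volume B = ⨆ k : ℕ, G ((k:ℝ) + 1) := hseq.symm
        _ ≤ ⨆ P : ℝ, g' P := by
            apply iSup_le
            intro k
            have : G ((k:ℝ) + 1) = g' ((k:ℝ) + 1) := by
              rw [hg'def]
              simp only
              rw [max_eq_left (le_add_of_nonneg_left (Nat.cast_nonneg k))]
            rw [this]
            exact le_iSup g' ((k:ℝ) + 1)
  have ht1 : Tendsto g' atTop (nhds (volume B)) := by
    have := tendsto_atTop_iSup hg'mono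
    rwa [hsup] at this
  refine ht1.congr' ?_
  filter_upwards [eventually_ge_atTop (1:ℝ)] with P hP
  rw [hg'def]
  simp only
  rw [max_eq_left hP, key P hP]
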